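/- arXiv:2602.19739 — 2 statements merged into one kernel-verified Lean document; each statement's English description precedes it below -/
import Mathlib

section
/- Let V be a real inner product space of dimension n ≥ 2, θ a nonzero covector in V*, and φ a symmetric bilinear form on V. If θ_k φ_{ij} = (1/(n+1))(g_{ki} α_j + g_{kj} α_i) for all indices, where α_j := θ^l φ_{lj} is the contraction of φ with θ (indices raised with the inner product g), then φ = 0. -/
open Finset

/-- Injectivity of the principal symbol of the Sinjukov operator `S`:
in an orthonormal basis of an `n`-dimensional real inner product space (`n ≥ 2`),
if `θ ≠ 0` and `θ_k φ_{ij} = (1/(n+1))(δ_{ki} α_j + δ_{kj} α_i)` where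
`α_j = ∑_l θ_l φ_{lj}`, then `φ = 0`. -/
theorem sinjukov_symbol_injective (n : ℕ) (hn : 2 ≤ n)
    (θ : Fin n → ℝ) (hθ : θ ≠ 0)
    (φ : Fin n → Fin n → ℝ) (hsym : ∀ i j, φ i j = φ j i)
    (h : ∀ k i j, θ k * φ i j =
      (1 / (n + 1)) * ((if k = i then (1:ℝ) else 0) * (∑ l, θ l * φ l j) +
        (if k = j then (1:ℝ) else 0) * (∑ l, θ l * φ l i))) :
    φ = 0 := by
  classical
  set c : ℝ := 1 / (n + 1) with hc
  have α : Fin n → ℝ := fun j => ∑ l, θ l * φ l j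
  -- notation
  let A : Fin n → ℝ := fun j => ∑ l, θ l * φ l j
  let T : ℝ := ∑ k, θ k ^ 2
  let B : ℝ := ∑ j, θ j * A j
  have hT0 : 0 < T := by
    obtain ⟨k, hk⟩ := Function.ne_iff.mp hθ
    refine Finset.sum_pos' (fun i _ => sq_nonneg _) ⟨k, Finset.mem_univ k, ?_⟩
    exact pow_pos (abs_pos.mpr hk) 2 |>.trans_le (by rw [sq_abs])
  have h1 : ∀ i j, T * φ i j = c * (θ i * A j + θ j * A i) := by
    intro i j
    calc T * φ i j = ∑ k, θ k * (θ k * φ i j) := by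
          rw [Finset.sum_mul (f := fun k => θ k ^ 2)]
          exact Finset.sum_congr rfl (fun k _ => by ring)
      _ = ∑ k, θ k * (c * ((if k = i then (1:ℝ) else 0) * A j +
            (if k = j then (1:ℝ) else 0) * A i)) :=
          Finset.sum_congr rfl (fun k _ => by rw [h k i j])
      _ = (∑ k, (if k = i then θ k * (c * A j) else 0)) +
          (∑ k, (if k = j then θ k * (c * A i) else 0)) := by
          rw [← Finset.sum_add_distrib]
          refine Finset.sum_congr rfl (fun k _ => ?_)
          split_ifs <;> ring
      _ = θ i * (c * A j) + θ j * (c * A i) := by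
          rw [Finset.sum_ite_eq' univ i, Finset.sum_ite_eq' univ j]
          simp
      _ = c * (θ i * A j + θ j * A i) := by ring
  have h2 : ∀ j, T * A j = c * (T * A j + θ j * B) := by
    intro j
    calc T * A j = ∑ i, θ i * (T * φ i j) := by
          rw [Finset.mul_sum (f := fun l => θ l * φ l j)]
          exact Finset.sum_congr rfl (fun i _ => by ring)
      _ = ∑ i, θ i * (c * (θ i * A j + θ j * A i)) :=
          Finset.sum_congr rfl (fun i _ => by rw [h1 i j])
      _ = ∑ i, (c * (θ i ^ 2 * A j) + c * (θ j * (θ i * A i))) :=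
          Finset.sum_congr rfl (fun i _ => by ring)
      _ = c * ((∑ i, θ i ^ 2) * A j) + c * (θ j * ∑ i, θ i * A i) := by
          rw [Finset.sum_add_distrib]
          congr 1
          · rw [← Finset.mul_sum, ← Finset.sum_mul]
          · rw [← Finset.mul_sum, ← Finset.mul_sum]
      _ = c * (T * A j + θ j * B) := by ring
  have h3 : T * B = c * (2 * (T * B)) := by
    calc T * B = ∑ j, θ j * (T * A j) := by
          rw [Finset.mul_sum (f := fun j => θ j * A j)]
          exact Finset.sum_congr rfl (fun j _ => by ring)
      _ = ∑ j, θ j * (c * (T * A j + θ j * B)) :=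
          Finset.sum_congr rfl (fun j _ => by conv_lhs => rw [h2 j])
      _ = ∑ j, (c * (θ j * (T * A j)) + c * (θ j ^ 2 * B)) :=
          Finset.sum_congr rfl (fun j _ => by ring)
      _ = c * (∑ j, θ j * (T * A j)) + c * ((∑ j, θ j ^ 2) * B) := by
          rw [Finset.sum_add_distrib]
          congr 1
          · rw [← Finset.mul_sum]
          · rw [← Finset.mul_sum, ← Finset.sum_mul]
      _ = c * (∑ j, θ j * (T * A j)) + c * (T * B) := rfl
      _ = c * (T * B) + c * (T * B) := by
          rw [show (∑ j, θ j * (T * A j)) = T * B from by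
            rw [Finset.mul_sum (f := fun j => θ j * A j)]
            exact Finset.sum_congr rfl (fun j _ => by ring)]
      _ = c * (2 * (T * B)) := by ring
  have hn3 : (3 : ℝ) ≤ (n : ℝ) + 1 := by
    have : (2 : ℝ) ≤ (n : ℝ) := by exact_mod_cast hn
    linarith
  have hc1 : c < 1 / 2 := by
    rw [hc, div_lt_div_iff₀ (by linarith) (by norm_num)]; linarith
  have hc0 : 0 < c := by rw [hc]; positivity
  have hB0 : B = 0 := by
    have key : (1 - 2 * c) * (T * B) = 0 := by linarith [h3]
    rcases mul_eq_zero.mp key with h' | h'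
    · linarith
    · rcases mul_eq_zero.mp h' with h'' | h''
      · exact absurd h'' (ne_of_gt hT0)
      · exact h''
  have hA0 : ∀ j, A j = 0 := by
    intro j
    have e := h2 j
    rw [hB0, mul_zero, add_zero] at e
    have key : (1 - c) * (T * A j) = 0 := by linarith
    rcases mul_eq_zero.mp key with h' | h'
    · linarith
    · rcases mul_eq_zero.mp h' with h'' | h''
      · exact absurd h'' (ne_of_gt hT0)
      · exact h''
  funext i j
  have e := h1 i j
  rw [hA0 i, hA0 j, mul_zero, mul_zero, add_zero, mul_zero] at e
  simp only [Pi.zero_apply]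
  rcases mul_eq_zero.mp e with h' | h'
  · exact absurd h' (ne_of_gt hT0)
  · exact h'
end

section
/- Let V be a real inner product space of dimension n ≥ 2, and ω a nonzero covector. Define the linear map σ: V* → V* ⊗ Sym²(V*) by (σθ)_{kij} = (n+1) ω_k (ω_i θ_j + ω_j θ_i) − 2 g_{ij} ω_k (ω^l θ_l) − g_{kj} ω_i (ω^l θ_l) − g_{ki} ω_j (ω^l θ_l). Then σ is injective: σθ = 0 implies θ = 0. -/
open Finset

/-- Injectivity of the principal symbol of the Eisenhart operator `E`:
for a nonzero covector `ω` on an `n`-dimensional real inner product space (`n ≥ 2`),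
if `(n+1) ω_k (ω_i θ_j + ω_j θ_i) − 2 δ_{ij} ω_k c − δ_{kj} ω_i c − δ_{ki} ω_j c = 0`
for all `k i j`, where `c = ∑_l ω_l θ_l`, then `θ = 0`. -/
theorem eisenhart_symbol_injective (n : ℕ) (hn : 2 ≤ n)
    (ω : Fin n → ℝ) (hω : ω ≠ 0) (θ : Fin n → ℝ)
    (h : ∀ k i j, ((n : ℝ) + 1) * ω k * (ω i * θ j + ω j * θ i) -
      2 * (if i = j then (1:ℝ) else 0) * ω k * (∑ l, ω l * θ l) -
      (if k = j then (1:ℝ) else 0) * ω i * (∑ l, ω l * θ l) -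
      (if k = i then (1:ℝ) else 0) * ω j * (∑ l, ω l * θ l) = 0) :
    θ = 0 := by
  set c := ∑ l, ω l * θ l with hc
  set S := ∑ k, ω k * ω k with hS
  obtain ⟨k0, hk0⟩ : ∃ k, ω k ≠ 0 := by
    by_contra hcon
    push_neg at hcon
    exact hω (funext fun k => hcon k)
  have hSpos : 0 < S := Finset.sum_pos' (fun i _ => mul_self_nonneg _)
    ⟨k0, Finset.mem_univ _, mul_self_pos.mpr hk0⟩
  have hn2 : (2:ℝ) ≤ (n:ℝ) := by exact_mod_cast hn
  have key : ∀ j, ((n : ℝ) + 1) * S * θ j - 2 * ω j * c = 0 := by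
    intro j
    have h0 : ∑ k, (((n : ℝ) + 1) * ω k * (ω k * θ j + ω j * θ k) -
        2 * (if k = j then (1:ℝ) else 0) * ω k * c -
        (if k = j then (1:ℝ) else 0) * ω k * c -
        (if k = k then (1:ℝ) else 0) * ω j * c) = 0 :=
      Finset.sum_eq_zero fun k _ => h k k j
    have A : ∑ k, ((n : ℝ) + 1) * ω k * (ω k * θ j + ω j * θ k)
        = ((n : ℝ) + 1) * S * θ j + ((n : ℝ) + 1) * ω j * c := by
      have e : ∑ k, ((n : ℝ) + 1) * ω k * (ω k * θ j + ω j * θ k)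
          = ∑ k, ((((n : ℝ) + 1) * θ j) * (ω k * ω k)
            + (((n : ℝ) + 1) * ω j) * (ω k * θ k)) :=
        Finset.sum_congr rfl fun k _ => by ring
      rw [e, Finset.sum_add_distrib, ← Finset.mul_sum, ← Finset.mul_sum, ← hS, ← hc]
      ring
    have B : ∑ k, 2 * (if k = j then (1:ℝ) else 0) * ω k * c = 2 * ω j * c := by
      rw [Finset.sum_eq_single j (fun b _ hb => by simp [hb]) (by simp)]
      simp
    have B' : ∑ k, (if k = j then (1:ℝ) else 0) * ω k * c = ω j * c := by
      rw [Finset.sum_eq_single j (fun b _ hb => by simp [hb]) (by simp)]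
      simp
    have C : ∑ k : Fin n, (if k = k then (1:ℝ) else 0) * ω j * c = n * ω j * c := by
      simp [Finset.sum_const, Finset.card_univ, mul_assoc]
    rw [Finset.sum_sub_distrib, Finset.sum_sub_distrib, Finset.sum_sub_distrib,
      A, B, B', C] at h0
    linarith [h0]
  have hc0 : c = 0 := by
    have h2 : ∑ j, ω j * (((n : ℝ) + 1) * S * θ j - 2 * ω j * c) = 0 := by
      simp [key]
    have e : ∑ j, ω j * (((n : ℝ) + 1) * S * θ j - 2 * ω j * c)
        = ∑ j, ((((n : ℝ) + 1) * S) * (ω j * θ j) - (2 * c) * (ω j * ω j)) :=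
      Finset.sum_congr rfl fun k _ => by ring
    rw [e, Finset.sum_sub_distrib, ← Finset.mul_sum, ← Finset.mul_sum, ← hc, ← hS] at h2
    -- h2 : (n+1)*S*c - 2*c*S = 0, i.e. (n-1)*S*c = 0
    have h3 : ((n : ℝ) - 1) * (S * c) = 0 := by linear_combination h2
    rcases mul_eq_zero.mp h3 with h4 | h4
    · linarith
    · exact (mul_eq_zero.mp h4).resolve_left hSpos.ne'
  funext j
  have hkey := key j
  rw [hc0] at hkey
  have hn1 : (0:ℝ) < ((n:ℝ) + 1) * S := by positivity
  simp only [mul_zero, sub_zero] at hkey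
  have := mul_eq_zero.mp hkey
  rcases this with h5 | h5
  · exact absurd h5 hn1.ne'
  · simpa using h5
end
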